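/- For every k ∈ ℕ, every tree T on n vertices whose growth is at most k satisfies b(T) ≤ ⌈√(n + 400·k⁴)⌉. -/

import Mathlib

open SimpleGraph

/-- A graph is `k`-burnable if there is a sequence of `k` vertices `v 0, …, v (k-1)`
(`v i` being set on fire at step `i+1`) whose closed balls of radii `k-1-i` cover the graph. -/
def Burnable {V : Type*} (G : SimpleGraph V) (k : ℕ) : Prop :=
  ∃ v : Fin k → V, ∀ u : V, ∃ i : Fin k,
    G.Reachable (v i) u ∧ G.dist (v i) u ≤ k - 1 - (i : ℕ)

/-- The burning number of a graph: the least `k` such that `G` is `k`-burnable. -/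
noncomputable def burningNumber {V : Type*} (G : SimpleGraph V) : ℕ :=
  sInf {k | Burnable G k}

/-- `G` has growth at most `k`: every vertex of `G` is within distance `k`
of some path in `G`. -/
def GrowthLE {V : Type*} (G : SimpleGraph V) (k : ℕ) : Prop :=
  ∃ (a b : V) (P : G.Walk a b), P.IsPath ∧ ∀ x : V, ∃ y ∈ P.support, G.dist y x ≤ k

namespace BurnKey

variable (k L : ℕ) (σ : ℕ → ℕ)

def lam (y : ℕ) : ℕ := Finset.sup (Finset.Ioc y (L+1)) (fun t => σ t - (t - (y+1)))

def rho (y : ℕ) : ℕ := Finset.sup (Finset.range (y+1)) (fun t => σ t - (y - t))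

def Zset : Finset ℕ := (Finset.range (L + k + 2)).filter (fun y => lam L σ y ≠ 0 ∨ rho σ y ≠ 0)

def Afun (y : ℕ) : ℕ := ((Zset k L σ).filter (fun z => y < z)).card

def cap (U : Finset ℕ) : ℕ := ∑ r ∈ U, (2 * r + 1)

def Efun (u : ℕ) : ℕ := 2 * k * min u (22 * k + 2)

def good : ℕ → List (ℕ × ℕ × ℕ) → Prop
  | y, [] => L + 1 ≤ y
  | y, s :: rest => s.2.1 = y ∧ y < s.2.2 ∧
      (s.2.2 - y) + lam L σ y + rho σ s.2.2 ≤ 2 * s.1 + 1 ∧ good s.2.2 rest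

variable {k L σ}

lemma lam_le_k (hσk : ∀ t, σ t ≤ k) {y : ℕ} : lam L σ y ≤ k := by
  apply Finset.sup_le; intro t _; exact le_trans (Nat.sub_le _ _) (hσk t)

lemma rho_le_k (hσk : ∀ t, σ t ≤ k) {y : ℕ} : rho σ y ≤ k := by
  apply Finset.sup_le; intro t _; exact le_trans (Nat.sub_le _ _) (hσk t)

lemma lam_eq_zero {y : ℕ} (h : L + 1 ≤ y) : lam L σ y = 0 := by
  rw [lam, Finset.Ioc_eq_empty (by omega), Finset.sup_empty]; rfl

lemma rho_eq_zero (hσk : ∀ t, σ t ≤ k) (hσL : ∀ t, L + 1 < t → σ t = 0)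
    {y : ℕ} (h : L + k + 2 ≤ y) : rho σ y = 0 := by
  rw [rho]
  apply Nat.eq_zero_of_le_zero
  apply Finset.sup_le
  intro t ht
  rw [Finset.mem_range] at ht
  by_cases hc : L + 1 < t
  · simp [hσL t hc]
  · have h1 := hσk t
    have h2 : σ t ≤ y - t := by omega
    simpa [Nat.sub_eq_zero_iff_le] using h2

lemma not_mem_Z (hσk : ∀ t, σ t ≤ k) (hσL : ∀ t, L + 1 < t → σ t = 0)
    {y : ℕ} (h : y ∉ Zset k L σ) : lam L σ y = 0 ∧ rho σ y = 0 := by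
  by_cases hy : y < L + k + 2
  · rw [Zset, Finset.mem_filter] at h
    push_neg at h
    have := h (Finset.mem_range.2 hy)
    tauto
  · exact ⟨lam_eq_zero (by omega), rho_eq_zero hσk hσL (by omega)⟩

lemma A_mono {y y' : ℕ} (h : y ≤ y') : Afun k L σ y' ≤ Afun k L σ y := by
  apply Finset.card_le_card
  exact Finset.monotone_filter_right _ (fun z hz h' => lt_of_le_of_lt h h')

lemma A_split {y y' : ℕ} (h : y ≤ y') :
    Afun k L σ y' + ((Zset k L σ).filter (fun z => y < z ∧ z ≤ y')).card ≤ Afun k L σ y := by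
  have hdisj : Disjoint ((Zset k L σ).filter (fun z => y < z ∧ z ≤ y'))
      ((Zset k L σ).filter (fun z => y' < z)) := by
    apply Finset.disjoint_filter_filter'
    rw [disjoint_iff_inf_le]
    intro z hz
    simp only [Pi.inf_apply, inf_Prop_eq] at hz
    omega
  rw [Afun, add_comm, ← Finset.card_union_of_disjoint hdisj]
  apply Finset.card_le_card
  intro z hz
  rw [Finset.mem_union, Finset.mem_filter, Finset.mem_filter] at hz
  rw [Finset.mem_filter]
  rcases hz with h1 | h1
  · exact ⟨h1.1, h1.2.1⟩
  · exact ⟨h1.1, by omega⟩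

lemma count_Ioc_le (a b : ℕ) :
    ((Zset k L σ).filter (fun z => a < z ∧ z ≤ b)).card ≤ b - a := by
  have hsub : ((Zset k L σ).filter (fun z => a < z ∧ z ≤ b)) ⊆ Finset.Ioc a b := by
    intro z hz
    rw [Finset.mem_filter] at hz
    exact Finset.mem_Ioc.2 hz.2
  calc _ ≤ (Finset.Ioc a b).card := Finset.card_le_card hsub
    _ = b - a := Nat.card_Ioc a b

lemma count_split (a b c : ℕ) :
    ((Zset k L σ).filter (fun z => a < z ∧ z ≤ c)).card ≤
      ((Zset k L σ).filter (fun z => a < z ∧ z ≤ b)).card +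
      ((Zset k L σ).filter (fun z => b < z ∧ z ≤ c)).card := by
  calc ((Zset k L σ).filter (fun z => a < z ∧ z ≤ c)).card
      ≤ (((Zset k L σ).filter (fun z => a < z ∧ z ≤ b)) ∪
         ((Zset k L σ).filter (fun z => b < z ∧ z ≤ c))).card := by
        apply Finset.card_le_card
        intro z hz
        rw [Finset.mem_filter] at hz
        rw [Finset.mem_union, Finset.mem_filter, Finset.mem_filter]
        rcases le_or_gt z b with hb | hb
        · exact Or.inl ⟨hz.1, hz.2.1, hb⟩
        · exact Or.inr ⟨hz.1, hb, hz.2.2⟩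
    _ ≤ _ := Finset.card_union_le _ _

lemma Efun_mono {a b : ℕ} (h : a ≤ b) : Efun k a ≤ Efun k b := by
  unfold Efun
  exact Nat.mul_le_mul_left _ (min_le_min h le_rfl)

lemma Efun_step {u : ℕ} (h1 : 1 ≤ u) (h2 : u ≤ 22 * k + 2) :
    Efun k u = Efun k (u - 1) + 2 * k := by
  unfold Efun
  rw [min_eq_left (by omega), min_eq_left (by omega)]
  have h3 : u = (u - 1) + 1 := by omega
  conv_lhs => rw [h3]
  ring

theorem rec_main (hσk : ∀ t, σ t ≤ k) (hσL : ∀ t, L + 1 < t → σ t = 0) :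
    ∀ (n : ℕ) (U : Finset ℕ), U.card ≤ n → ∀ y yp : ℕ, yp ≤ y → y ≤ L →
    (∀ r ∈ U, 2 * k ≤ r) →
    4 * (L + 1 - y) + 4 * lam L σ y + Afun k L σ y + Afun k L σ yp
        + 4 * Efun k U.card ≤ 4 * cap U →
    ∃ segs : List (ℕ × ℕ × ℕ), good L σ y segs ∧ (segs.map Prod.fst).Nodup ∧
      ∀ s ∈ segs, s.1 ∈ U := by
  intro n
  induction n with
  | zero =>
    intro U hU y yp _ hyL _ hinv
    rw [Nat.le_zero, Finset.card_eq_zero] at hU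
    subst hU
    rw [cap, Finset.sum_empty] at hinv
    omega
  | succ n ih =>
    intro U hU y yp hyp hyL h2k hinv
    by_cases hUe : U = ∅
    · subst hUe
      rw [cap, Finset.sum_empty] at hinv
      omega
    have hUne : U.Nonempty := Finset.nonempty_iff_ne_empty.2 hUe
    have hly : lam L σ y ≤ k := lam_le_k hσk
    by_cases hsmall : U.card ≤ 22 * k + 2
    · -- ENDGAME: single segment with the largest remaining radius
      obtain ⟨r, hrU⟩ := hUne
      have hUpos : 0 < U.card := Finset.card_pos.2 ⟨r, hrU⟩
      have hr2k : 2 * k ≤ r := h2k r hrU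
      have hrhoc : ∀ c, rho σ c ≤ k := fun c => rho_le_k hσk
      have hyc : y < y + (2 * r + 1) - (lam L σ y + k) := by omega
      have hfeas : ((y + (2 * r + 1) - (lam L σ y + k)) - y) + lam L σ y
          + rho σ (y + (2 * r + 1) - (lam L σ y + k)) ≤ 2 * r + 1 := by
        have := hrhoc (y + (2 * r + 1) - (lam L σ y + k)); omega
      by_cases hfin : L + 1 ≤ y + (2 * r + 1) - (lam L σ y + k)
      · refine ⟨[(r, y, y + (2 * r + 1) - (lam L σ y + k))],
          ⟨rfl, hyc, hfeas, hfin⟩, by simp, by simp [hrU]⟩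
      · push_neg at hfin
        have hcL : y + (2 * r + 1) - (lam L σ y + k) ≤ L := by omega
        have hcap : cap U = (2*r+1) + cap (U.erase r) := (Finset.add_sum_erase _ _ hrU).symm
        have hcarde : (U.erase r).card = U.card - 1 := Finset.card_erase_of_mem hrU
        have hcard : (U.erase r).card ≤ n := by omega
        have hAc : Afun k L σ (y + (2 * r + 1) - (lam L σ y + k)) ≤ Afun k L σ yp :=
          A_mono (by omega)
        have hE : Efun k U.card = Efun k (U.card - 1) + 2 * k :=
          Efun_step hUpos hsmall
        have hlc : lam L σ (y + (2 * r + 1) - (lam L σ y + k)) ≤ k := lam_le_k hσk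
        obtain ⟨segs, hgood, hnd, hsub⟩ := ih (U.erase r) hcard
          (y + (2 * r + 1) - (lam L σ y + k)) y (by omega) hcL
          (fun r' hr' => h2k r' (Finset.mem_of_mem_erase hr'))
          (by
            rw [hcarde]
            have hAy : Afun k L σ (y + (2 * r + 1) - (lam L σ y + k)) ≤ Afun k L σ y :=
              A_mono (by omega)
            have hAyyp : Afun k L σ y ≤ Afun k L σ yp := A_mono hyp
            omega)
        refine ⟨(r, y, y + (2 * r + 1) - (lam L σ y + k)) :: segs,
          ⟨rfl, hyc, hfeas, hgood⟩, ?_, ?_⟩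
        · rw [List.map_cons, List.nodup_cons]
          refine ⟨fun hmem => ?_, hnd⟩
          rw [List.mem_map] at hmem
          obtain ⟨s, hs, hsr⟩ := hmem
          have := hsub s hs
          rw [hsr] at this
          exact (Finset.notMem_erase r U) this
        · intro s hs
          rcases List.mem_cons.1 hs with rfl | hs
          · exact hrU
          · exact Finset.mem_of_mem_erase (hsub s hs)
    · -- MAIN PHASE
      push_neg at hsmall
      have hu3 : 22 * k + 3 ≤ U.card := hsmall
      obtain ⟨M1, hM1U⟩ := hUne
      have hU1ne : (U.erase M1).Nonempty := by
        rw [← Finset.card_pos, Finset.card_erase_of_mem hM1U]; omega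
      have hpoolcard : (U.erase M1).card = U.card - 1 := Finset.card_erase_of_mem hM1U
      have hpoolsubU : (U.erase M1) ⊆ U := Finset.erase_subset _ _
      by_cases hclean : ∃ b ∈ U.erase M1,
          (y + (2*b+1) - lam L σ y) ∉ Zset k L σ ∧
          (y + (2*b+1) - lam L σ y + (2*M1+1)) ∉ Zset k L σ
      · -- UNBLOCKED pair
        obtain ⟨b, hbpool, hint, hext⟩ := hclean
        have hbU : b ∈ U := hpoolsubU hbpool
        have hbM1 : b ≠ M1 := Finset.ne_of_mem_erase hbpool
        have hb2k : 2 * k ≤ b := h2k b hbU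
        have hM12k : 2 * k ≤ M1 := h2k M1 hM1U
        obtain ⟨hli, hri⟩ := not_mem_Z hσk hσL hint
        obtain ⟨hle, hre⟩ := not_mem_Z hσk hσL hext
        have hyi : y < y + (2*b+1) - lam L σ y := by omega
        have hie : y + (2*b+1) - lam L σ y < y + (2*b+1) - lam L σ y + (2*M1+1) := by omega
        have hfeas1 : ((y + (2*b+1) - lam L σ y) - y) + lam L σ y
            + rho σ (y + (2*b+1) - lam L σ y) ≤ 2 * b + 1 := by
          rw [hri]; omega
        have hfeas2 : ((y + (2*b+1) - lam L σ y + (2*M1+1)) - (y + (2*b+1) - lam L σ y))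
            + lam L σ (y + (2*b+1) - lam L σ y)
            + rho σ (y + (2*b+1) - lam L σ y + (2*M1+1)) ≤ 2 * M1 + 1 := by
          rw [hli, hre]; omega
        by_cases hfin : L + 1 ≤ y + (2*b+1) - lam L σ y + (2*M1+1)
        · refine ⟨[(b, y, y + (2*b+1) - lam L σ y),
            (M1, y + (2*b+1) - lam L σ y, y + (2*b+1) - lam L σ y + (2*M1+1))],
            ⟨rfl, hyi, hfeas1, rfl, hie, hfeas2, hfin⟩, ?_, ?_⟩
          · simp [hbM1]
          · intro s hs
            rcases List.mem_cons.1 hs with rfl | hs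
            · exact hbU
            · rcases List.mem_cons.1 hs with rfl | hs
              · exact hM1U
              · simp at hs
        · push_neg at hfin
          have hy'L : y + (2*b+1) - lam L σ y + (2*M1+1) ≤ L := by omega
          have hbU1 : b ∈ U.erase M1 := hbpool
          have hcap1 : cap U = (2*M1+1) + cap (U.erase M1) :=
            (Finset.add_sum_erase _ _ hM1U).symm
          have hcap2 : cap (U.erase M1) = (2*b+1) + cap ((U.erase M1).erase b) :=
            (Finset.add_sum_erase _ _ hbU1).symm
          have hcard2 : ((U.erase M1).erase b).card = U.card - 2 := by
            rw [Finset.card_erase_of_mem hbU1, Finset.card_erase_of_mem hM1U]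
            omega
          have hcard : ((U.erase M1).erase b).card ≤ n := by omega
          have hAy' : Afun k L σ (y + (2*b+1) - lam L σ y + (2*M1+1)) ≤ Afun k L σ yp :=
            A_mono (by omega)
          have hAy : Afun k L σ (y + (2*b+1) - lam L σ y + (2*M1+1)) ≤ Afun k L σ y :=
            A_mono (by omega)
          have hEm : Efun k (U.card - 2) ≤ Efun k U.card := Efun_mono (by omega)
          obtain ⟨segs, hgood, hnd, hsub⟩ := ih ((U.erase M1).erase b) hcard
            (y + (2*b+1) - lam L σ y + (2*M1+1)) y (by omega) hy'L
            (fun r' hr' => h2k r' (Finset.mem_of_mem_erase (Finset.mem_of_mem_erase hr')))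
            (by rw [hcard2, hle]; omega)
          refine ⟨(b, y, y + (2*b+1) - lam L σ y) ::
            (M1, y + (2*b+1) - lam L σ y, y + (2*b+1) - lam L σ y + (2*M1+1)) :: segs,
            ⟨rfl, hyi, hfeas1, rfl, hie, hfeas2, hgood⟩, ?_, ?_⟩
          · rw [List.map_cons, List.map_cons, List.nodup_cons, List.nodup_cons]
            have hbnot : b ∉ segs.map Prod.fst := by
              intro hmem
              rw [List.mem_map] at hmem
              obtain ⟨s, hs, hsr⟩ := hmem
              have := hsub s hs
              rw [hsr] at this
              exact (Finset.notMem_erase b _) this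
            have hM1not : M1 ∉ segs.map Prod.fst := by
              intro hmem
              rw [List.mem_map] at hmem
              obtain ⟨s, hs, hsr⟩ := hmem
              have := Finset.mem_of_mem_erase (hsub s hs)
              rw [hsr] at this
              exact (Finset.notMem_erase M1 U) this
            refine ⟨?_, hM1not, hnd⟩
            simp only [List.mem_cons, List.mem_map]
            push_neg
            exact ⟨hbM1, fun s hs => by
              intro hc
              exact hbnot (by rw [List.mem_map]; exact ⟨s, hs, hc⟩)⟩
          · intro s hs
            rcases List.mem_cons.1 hs with rfl | hs
            · exact hbU
            · rcases List.mem_cons.1 hs with rfl | hs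
              · exact hM1U
              · exact Finset.mem_of_mem_erase (Finset.mem_of_mem_erase (hsub s hs))
      · -- BLOCKED pair
        push_neg at hclean
        set pm := (U.erase M1).max' hU1ne with hpmdef
        have hpm : pm ∈ U.erase M1 := Finset.max'_mem _ hU1ne
        have hpmU : pm ∈ U := hpoolsubU hpm
        have hpmM1 : pm ≠ M1 := Finset.ne_of_mem_erase hpm
        have hpm2k : 2 * k ≤ pm := h2k pm hpmU
        have hM12k : 2 * k ≤ M1 := h2k M1 hM1U
        -- counting: pool injects into Z ∩ (y, yh]
        have hcount : U.card - 1 ≤ ((Zset k L σ).filter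
            (fun z => y < z ∧ z ≤ y + (2*pm+1) - lam L σ y + (2*M1+1))).card := by
          rw [← hpoolcard]
          apply Finset.card_le_card_of_injOn
            (fun b => if (y + (2*b+1) - lam L σ y) ∈ Zset k L σ
              then y + (2*b+1) - lam L σ y else y + (2*b+1) - lam L σ y + (2*M1+1))
          · intro b hb
            have hbpm : b ≤ pm := Finset.le_max' _ _ hb
            have hb2k : 2 * k ≤ b := h2k b (hpoolsubU hb)
            simp only [Finset.mem_coe, Finset.mem_filter]
            by_cases hZ : (y + (2*b+1) - lam L σ y) ∈ Zset k L σ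
            · rw [if_pos hZ]
              exact ⟨hZ, by omega, by omega⟩
            · rw [if_neg hZ]
              exact ⟨hclean b hb hZ, by omega, by omega⟩
          · intro b1 hb1 b2 hb2 heq
            have h1 : 2 * k ≤ b1 := h2k b1 (hpoolsubU hb1)
            have h2 : 2 * k ≤ b2 := h2k b2 (hpoolsubU hb2)
            simp only at heq
            split_ifs at heq with ha hb hb <;> omega
        have hyc1 : y < y + (2*pm+1) - (lam L σ y + k) := by omega
        have hc1c2 : y + (2*pm+1) - (lam L σ y + k) <
            y + (2*pm+1) - (lam L σ y + k)
              + (2*M1+1) - (lam L σ (y + (2*pm+1) - (lam L σ y + k)) + k) := by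
          have := lam_le_k (σ := σ) (L := L) hσk (y := y + (2*pm+1) - (lam L σ y + k))
          omega
        have hlc1 : lam L σ (y + (2*pm+1) - (lam L σ y + k)) ≤ k := lam_le_k hσk
        have hfeas1 : ((y + (2*pm+1) - (lam L σ y + k)) - y) + lam L σ y
            + rho σ (y + (2*pm+1) - (lam L σ y + k)) ≤ 2 * pm + 1 := by
          have := rho_le_k (σ := σ) hσk (y := y + (2*pm+1) - (lam L σ y + k)); omega
        by_cases hfin1 : L + 1 ≤ y + (2*pm+1) - (lam L σ y + k)
        · exact ⟨[(pm, y, y + (2*pm+1) - (lam L σ y + k))],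
            ⟨rfl, hyc1, hfeas1, hfin1⟩, by simp, by simp [hpmU]⟩
        push_neg at hfin1
        have hfeas2 : ((y + (2*pm+1) - (lam L σ y + k)
              + (2*M1+1) - (lam L σ (y + (2*pm+1) - (lam L σ y + k)) + k))
              - (y + (2*pm+1) - (lam L σ y + k)))
            + lam L σ (y + (2*pm+1) - (lam L σ y + k))
            + rho σ (y + (2*pm+1) - (lam L σ y + k)
              + (2*M1+1) - (lam L σ (y + (2*pm+1) - (lam L σ y + k)) + k)) ≤ 2 * M1 + 1 := by
          have := rho_le_k (σ := σ) hσk (y := y + (2*pm+1) - (lam L σ y + k)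
            + (2*M1+1) - (lam L σ (y + (2*pm+1) - (lam L σ y + k)) + k))
          omega
        by_cases hfin2 : L + 1 ≤ y + (2*pm+1) - (lam L σ y + k)
            + (2*M1+1) - (lam L σ (y + (2*pm+1) - (lam L σ y + k)) + k)
        · refine ⟨[(pm, y, y + (2*pm+1) - (lam L σ y + k)),
            (M1, y + (2*pm+1) - (lam L σ y + k),
              y + (2*pm+1) - (lam L σ y + k)
              + (2*M1+1) - (lam L σ (y + (2*pm+1) - (lam L σ y + k)) + k))],
            ⟨rfl, hyc1, hfeas1, rfl, hc1c2, hfeas2, hfin2⟩, by simp [hpmM1], ?_⟩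
          intro s hs
          rcases List.mem_cons.1 hs with rfl | hs
          · exact hpmU
          · rcases List.mem_cons.1 hs with rfl | hs
            · exact hM1U
            · simp at hs
        push_neg at hfin2
        have hc2L : y + (2*pm+1) - (lam L σ y + k)
            + (2*M1+1) - (lam L σ (y + (2*pm+1) - (lam L σ y + k)) + k) ≤ L := by omega
        have hpmU1 : pm ∈ U.erase M1 := hpm
        have hcap1 : cap U = (2*M1+1) + cap (U.erase M1) :=
          (Finset.add_sum_erase _ _ hM1U).symm
        have hcap2 : cap (U.erase M1) = (2*pm+1) + cap ((U.erase M1).erase pm) :=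
          (Finset.add_sum_erase _ _ hpmU1).symm
        have hcard2 : ((U.erase M1).erase pm).card = U.card - 2 := by
          rw [Finset.card_erase_of_mem hpmU1, Finset.card_erase_of_mem hM1U]
          omega
        have hcard : ((U.erase M1).erase pm).card ≤ n := by omega
        -- A bookkeeping
        have hAsplit := A_split (k := k) (L := L) (σ := σ)
          (y := y) (y' := y + (2*pm+1) - (lam L σ y + k)
            + (2*M1+1) - (lam L σ (y + (2*pm+1) - (lam L σ y + k)) + k)) (by omega)
        have hcsplit := count_split (k := k) (L := L) (σ := σ) y
          (y + (2*pm+1) - (lam L σ y + k)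
            + (2*M1+1) - (lam L σ (y + (2*pm+1) - (lam L σ y + k)) + k))
          (y + (2*pm+1) - lam L σ y + (2*M1+1))
        have hioc := count_Ioc_le (k := k) (L := L) (σ := σ)
          (y + (2*pm+1) - (lam L σ y + k)
            + (2*M1+1) - (lam L σ (y + (2*pm+1) - (lam L σ y + k)) + k))
          (y + (2*pm+1) - lam L σ y + (2*M1+1))
        have hAyyp : Afun k L σ y ≤ Afun k L σ yp := A_mono hyp
        have hEm : Efun k (U.card - 2) ≤ Efun k U.card := Efun_mono (by omega)
        have hlc2 : lam L σ (y + (2*pm+1) - (lam L σ y + k)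
            + (2*M1+1) - (lam L σ (y + (2*pm+1) - (lam L σ y + k)) + k)) ≤ k := lam_le_k hσk
        obtain ⟨segs, hgood, hnd, hsub⟩ := ih ((U.erase M1).erase pm) hcard
          (y + (2*pm+1) - (lam L σ y + k)
            + (2*M1+1) - (lam L σ (y + (2*pm+1) - (lam L σ y + k)) + k)) y
          (by omega) hc2L
          (fun r' hr' => h2k r' (Finset.mem_of_mem_erase (Finset.mem_of_mem_erase hr')))
          (by rw [hcard2]; omega)
        refine ⟨(pm, y, y + (2*pm+1) - (lam L σ y + k)) ::
          (M1, y + (2*pm+1) - (lam L σ y + k),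
            y + (2*pm+1) - (lam L σ y + k)
            + (2*M1+1) - (lam L σ (y + (2*pm+1) - (lam L σ y + k)) + k)) :: segs,
          ⟨rfl, hyc1, hfeas1, rfl, hc1c2, hfeas2, hgood⟩, ?_, ?_⟩
        · rw [List.map_cons, List.map_cons, List.nodup_cons, List.nodup_cons]
          have hpmnot : pm ∉ segs.map Prod.fst := by
            intro hmem
            rw [List.mem_map] at hmem
            obtain ⟨s, hs, hsr⟩ := hmem
            have := hsub s hs
            rw [hsr] at this
            exact (Finset.notMem_erase pm _) this
          have hM1not : M1 ∉ segs.map Prod.fst := by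
            intro hmem
            rw [List.mem_map] at hmem
            obtain ⟨s, hs, hsr⟩ := hmem
            have := Finset.mem_of_mem_erase (hsub s hs)
            rw [hsr] at this
            exact (Finset.notMem_erase M1 U) this
          refine ⟨?_, hM1not, hnd⟩
          simp only [List.mem_cons, List.mem_map]
          push_neg
          exact ⟨hpmM1, fun s hs => by
            intro hc
            exact hpmnot (by rw [List.mem_map]; exact ⟨s, hs, hc⟩)⟩
        · intro s hs
          rcases List.mem_cons.1 hs with rfl | hs
          · exact hpmU
          · rcases List.mem_cons.1 hs with rfl | hs
            · exact hM1U
            · exact Finset.mem_of_mem_erase (Finset.mem_of_mem_erase (hsub s hs))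


lemma sup_ne_zero {s : Finset ℕ} {f : ℕ → ℕ} (h : s.sup f ≠ 0) : ∃ t ∈ s, f t ≠ 0 := by
  by_contra hc
  push_neg at hc
  exact h (Nat.eq_zero_of_le_zero (Finset.sup_le (fun t ht => Nat.le_of_eq (hc t ht))))

lemma Zcard (hσL : ∀ t, L + 1 < t → σ t = 0) :
    (Zset k L σ).card ≤ 2 * ∑ t ∈ Finset.range (L + 2), σ t := by
  have hsub : Zset k L σ ⊆ ((Finset.range (L+2)).filter (fun t => σ t ≠ 0)).biUnion
      (fun t => Finset.Icc (t - σ t) (t + σ t - 1)) := by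
    intro y hy
    rw [Zset, Finset.mem_filter] at hy
    obtain ⟨-, hy⟩ := hy
    rw [Finset.mem_biUnion]
    rcases hy with hy | hy
    · rw [lam] at hy
      obtain ⟨t, ht, hne⟩ := sup_ne_zero hy
      rw [Finset.mem_Ioc] at ht
      refine ⟨t, Finset.mem_filter.2 ⟨Finset.mem_range.2 (by omega), by omega⟩,
        Finset.mem_Icc.2 (by omega)⟩
    · rw [rho] at hy
      obtain ⟨t, ht, hne⟩ := sup_ne_zero hy
      rw [Finset.mem_range] at ht
      have htL : t ≤ L + 1 := by
        by_contra hc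
        exact hne (by simp [hσL t (by omega)])
      refine ⟨t, Finset.mem_filter.2 ⟨Finset.mem_range.2 (by omega), by omega⟩,
        Finset.mem_Icc.2 (by omega)⟩
  calc (Zset k L σ).card ≤ _ := Finset.card_le_card hsub
    _ ≤ ∑ t ∈ (Finset.range (L+2)).filter (fun t => σ t ≠ 0),
          (Finset.Icc (t - σ t) (t + σ t - 1)).card :=
        Finset.card_biUnion_le
    _ ≤ ∑ t ∈ (Finset.range (L+2)).filter (fun t => σ t ≠ 0), 2 * σ t := by
        apply Finset.sum_le_sum; intro t ht
        rw [Finset.mem_filter] at ht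
        have h1 := Nat.card_Icc (t - σ t) (t + σ t - 1)
        have h2 : σ t ≠ 0 := ht.2
        omega
    _ ≤ ∑ t ∈ Finset.range (L+2), 2 * σ t :=
        Finset.sum_le_sum_of_subset (Finset.filter_subset _ _)
    _ = 2 * ∑ t ∈ Finset.range (L+2), σ t := by rw [Finset.mul_sum]


lemma lam_spec {y t : ℕ} (h1 : y < t) (h2 : t ≤ L + 1) :
    σ t ≤ lam L σ y + (t - (y+1)) := by
  have h : σ t - (t - (y+1)) ≤ lam L σ y := by
    rw [lam]
    simpa using Finset.le_sup (f := fun t => σ t - (t - (y+1))) (Finset.mem_Ioc.2 ⟨h1, h2⟩)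
  omega

lemma rho_spec {y t : ℕ} (h2 : t ≤ y) :
    σ t ≤ rho σ y + (y - t) := by
  have h : σ t - (y - t) ≤ rho σ y := by
    rw [rho]
    simpa using Finset.le_sup (f := fun t => σ t - (y - t))
      (Finset.mem_range.2 (Nat.lt_succ_of_le h2))
  omega

lemma seg_center (hσk : ∀ t, σ t ≤ k) {r a c t : ℕ}
    (hfeas : (c - a) + lam L σ a + rho σ c ≤ 2 * r + 1)
    (hr : 2 * k ≤ r) (h1 : a < t) (h2 : t ≤ c) (h3 : t ≤ L + 1) :
    1 ≤ min (a + 1 + (r - lam L σ a)) (L+1) ∧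
    min (a + 1 + (r - lam L σ a)) (L+1) ≤ L + 1 ∧
    σ t + min (a + 1 + (r - lam L σ a)) (L+1) ≤ t + r ∧
    σ t + t ≤ min (a + 1 + (r - lam L σ a)) (L+1) + r := by
  have hl := lam_spec (L := L) (σ := σ) h1 h3
  have hrho := rho_spec (σ := σ) h2
  have hlk : lam L σ a ≤ k := lam_le_k hσk
  have hrk : rho σ c ≤ k := rho_le_k hσk
  have hsk : σ t ≤ k := hσk t
  omega

lemma good_covers : ∀ {y : ℕ} {segs : List (ℕ × ℕ × ℕ)}, good L σ y segs →
    ∀ t, y < t → t ≤ L + 1 →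
    ∃ s ∈ segs, s.2.1 < t ∧ t ≤ s.2.2 ∧
      (s.2.2 - s.2.1) + lam L σ s.2.1 + rho σ s.2.2 ≤ 2 * s.1 + 1 := by
  intro y segs
  induction segs generalizing y with
  | nil =>
    intro h t ht hL
    simp only [good] at h
    omega
  | cons s rest ih =>
    intro h t ht hL
    obtain ⟨ha, hlt, hfeas, hrest⟩ := h
    by_cases hc : t ≤ s.2.2
    · refine ⟨s, List.mem_cons_self, by omega, hc, by rw [ha]; exact hfeas⟩
    · push_neg at hc
      obtain ⟨s', hs', h1, h2, h3⟩ := ih hrest t hc hL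
      exact ⟨s', List.mem_cons_of_mem _ hs', h1, h2, h3⟩

lemma sum_odd_Ico {a b : ℕ} (h : a ≤ b) :
    ∑ r ∈ Finset.Ico a b, (2 * r + 1) + a * a = b * b := by
  have h1 : ∑ r ∈ Finset.Ico 0 a, (2*r+1) + ∑ r ∈ Finset.Ico a b, (2*r+1)
      = ∑ r ∈ Finset.Ico 0 b, (2*r+1) :=
    Finset.sum_Ico_consecutive _ (Nat.zero_le a) h
  have h2 : ∀ n, ∑ r ∈ Finset.Ico 0 n, (2 * r + 1) = n * n := by
    intro n
    rw [← Finset.range_eq_Ico]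
    induction n with
    | zero => simp
    | succ n ih => rw [Finset.sum_range_succ, ih]; ring
  rw [h2, h2] at h1
  omega

theorem key (hσk : ∀ t, σ t ≤ k) (hσL : ∀ t, L + 1 < t → σ t = 0) (m : ℕ)
    (hm : L + 1 + (∑ t ∈ Finset.range (L+2), σ t) + 400*(k*k*k*k) ≤ m * m) :
    ∃ segs : List (ℕ × ℕ × ℕ), good L σ 0 segs ∧ (segs.map Prod.fst).Nodup ∧
      ∀ s ∈ segs, s.1 ∈ Finset.Ico (2*k) m := by
  have h2km : 2 * k ≤ m := by
    rcases Nat.eq_zero_or_pos k with rfl | hk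
    · omega
    by_contra hc
    push_neg at hc
    have h2 : m * m < (2*k) * (2*k) :=
      Nat.mul_lt_mul_of_lt_of_le (by omega) (by omega) (by omega)
    have e1 : k ≤ k * k := Nat.le_mul_of_pos_left _ hk
    have e2 : k * k ≤ k * k * k := Nat.le_mul_of_pos_right _ hk
    have e3 : k * k * k ≤ k * k * k * k := Nat.le_mul_of_pos_right _ hk
    have h4 : (2*k)*(2*k) = 4*(k*k) := by ring
    omega
  have hcap : cap (Finset.Ico (2*k) m) + 4*(k*k) = m * m := by
    have := sum_odd_Ico h2km
    have h4 : (2*k)*(2*k) = 4*(k*k) := by ring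
    rw [cap]
    omega
  have hA0 : Afun k L σ 0 ≤ 2 * ∑ t ∈ Finset.range (L+2), σ t := by
    calc Afun k L σ 0 ≤ (Zset k L σ).card :=
          Finset.card_le_card (Finset.filter_subset _ _)
      _ ≤ _ := Zcard hσL
  have hE : Efun k (Finset.Ico (2*k) m).card ≤ 44*(k*k) + 4*k := by
    unfold Efun
    calc 2 * k * min (Finset.Ico (2*k) m).card (22*k+2) ≤ 2*k*(22*k+2) :=
          Nat.mul_le_mul_left _ (min_le_right _ _)
      _ = 44*(k*k) + 4*k := by ring
  have hlam0 : lam L σ 0 ≤ k := lam_le_k hσk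
  have h5 : 192*(k*k) + 20*k ≤ 1600*(k*k*k*k) := by
    rcases Nat.eq_zero_or_pos k with rfl | hk
    · simp
    · have e1 : k ≤ k * k := Nat.le_mul_of_pos_left _ hk
      have e2 : k * k ≤ k * k * k := Nat.le_mul_of_pos_right _ hk
      have e3 : k * k * k ≤ k * k * k * k := Nat.le_mul_of_pos_right _ hk
      omega
  exact rec_main hσk hσL (Finset.Ico (2*k) m).card (Finset.Ico (2*k) m) le_rfl 0 0
    le_rfl (Nat.zero_le L) (fun r hr => (Finset.mem_Ico.1 hr).1)
    (by omega)

end BurnKey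



namespace BurnGraph

variable {V : Type*}

lemma dist_getVert_le {T : SimpleGraph V} (hconn : T.Connected) {a b : V} (w : T.Walk a b) :
    ∀ i j : ℕ, i ≤ j → T.dist (w.getVert i) (w.getVert j) ≤ j - i := by
  intro i j hij
  induction j, hij using Nat.le_induction with
  | base => simp
  | succ j hij ih =>
    have hstep : T.dist (w.getVert j) (w.getVert (j+1)) ≤ 1 := by
      by_cases hj : j < w.length
      · exact le_of_eq (SimpleGraph.dist_eq_one_iff_adj.2 (w.adj_getVert_succ hj))
      · push_neg at hj
        rw [w.getVert_of_length_le hj, w.getVert_of_length_le (by omega)]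
        simp [SimpleGraph.dist_self]
    have := hconn.dist_triangle (u := w.getVert i) (v := w.getVert j) (w := w.getVert (j+1))
    omega

lemma dist_getVert_both {T : SimpleGraph V} (hconn : T.Connected) {a b : V} (w : T.Walk a b)
    (i j : ℕ) : T.dist (w.getVert i) (w.getVert j) ≤ (j - i) + (i - j) := by
  rcases le_total i j with h | h
  · have := dist_getVert_le hconn w i j h; omega
  · have := dist_getVert_le hconn w j i h
    rw [SimpleGraph.dist_comm] at this; omega

lemma getVert_inj {T : SimpleGraph V} {a b : V} {w : T.Walk a b} (hp : w.IsPath) :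
    ∀ i j : ℕ, i ≤ w.length → j ≤ w.length → w.getVert i = w.getVert j → i = j := by
  induction w with
  | nil => intro i j hi hj _; simp at hi hj; omega
  | @cons u v c h q ih =>
    intro i j hi hj heq
    rw [Walk.cons_isPath_iff] at hp
    match i, j with
    | 0, 0 => rfl
    | 0, (j+1) =>
      exfalso
      rw [Walk.getVert_zero, Walk.getVert_cons_succ] at heq
      exact hp.2 (Walk.mem_support_iff_exists_getVert.2 ⟨j, heq.symm, by
        simpa using hj⟩)
    | (i+1), 0 =>
      exfalso
      rw [Walk.getVert_zero, Walk.getVert_cons_succ] at heq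
      exact hp.2 (Walk.mem_support_iff_exists_getVert.2 ⟨i, heq, by
        simpa using hi⟩)
    | (i+1), (j+1) =>
      rw [Walk.getVert_cons_succ, Walk.getVert_cons_succ] at heq
      have := ih hp.1 i j (by simpa using hi) (by simpa using hj) heq
      omega

variable (T : SimpleGraph V) (xs : ℕ → V) (L : ℕ)

noncomputable def DD (u : V) : ℕ :=
  ((Finset.range (L+1)).image (fun i => T.dist (xs i) u)).min'
    ⟨T.dist (xs 0) u, Finset.mem_image.2 ⟨0, by simp, rfl⟩⟩

lemma DD_le {u : V} {i : ℕ} (hi : i ≤ L) : DD T xs L u ≤ T.dist (xs i) u :=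
  Finset.min'_le _ _ (Finset.mem_image.2 ⟨i, Finset.mem_range.2 (by omega), rfl⟩)

lemma tt_nonempty (u : V) :
    ((Finset.range (L+1)).filter (fun i => T.dist (xs i) u = DD T xs L u)).Nonempty := by
  have := Finset.min'_mem ((Finset.range (L+1)).image (fun i => T.dist (xs i) u))
    ⟨T.dist (xs 0) u, Finset.mem_image.2 ⟨0, by simp, rfl⟩⟩
  rw [Finset.mem_image] at this
  obtain ⟨i, hi, hdi⟩ := this
  exact ⟨i, Finset.mem_filter.2 ⟨hi, hdi⟩⟩

noncomputable def tt (u : V) : ℕ :=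
  ((Finset.range (L+1)).filter (fun i => T.dist (xs i) u = DD T xs L u)).min'
    (tt_nonempty T xs L u)

lemma tt_mem (u : V) : tt T xs L u ≤ L ∧ T.dist (xs (tt T xs L u)) u = DD T xs L u := by
  have h1 : tt T xs L u ∈
      (Finset.range (L+1)).filter (fun i => T.dist (xs i) u = DD T xs L u) :=
    Finset.min'_mem _ (tt_nonempty T xs L u)
  rw [Finset.mem_filter, Finset.mem_range] at h1
  exact ⟨by omega, h1.2⟩

lemma tt_min {u : V} {i : ℕ} (hi : i ≤ L) (h : T.dist (xs i) u = DD T xs L u) :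
    tt T xs L u ≤ i := by
  apply Finset.min'_le
  exact Finset.mem_filter.2 ⟨Finset.mem_range.2 (by omega), h⟩

variable [Fintype V]

noncomputable def sfun (t : ℕ) : ℕ :=
  (Finset.univ.filter (fun u => tt T xs L u = t)).sup (DD T xs L)

lemma sfun_ge (u : V) : DD T xs L u ≤ sfun T xs L (tt T xs L u) :=
  Finset.le_sup (Finset.mem_filter.2 ⟨Finset.mem_univ u, rfl⟩)

lemma sfun_wit {t : ℕ} (h : sfun T xs L t ≠ 0) :
    ∃ u : V, tt T xs L u = t ∧ DD T xs L u = sfun T xs L t := by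
  have hne : (Finset.univ.filter (fun u => tt T xs L u = t)).Nonempty := by
    by_contra hc
    rw [Finset.not_nonempty_iff_eq_empty] at hc
    rw [sfun, hc, Finset.sup_empty] at h
    exact h rfl
  obtain ⟨u, hu, hval⟩ := Finset.exists_mem_eq_sup _ hne (DD T xs L)
  rw [Finset.mem_filter] at hu
  exact ⟨u, hu.2, hval.symm⟩


lemma wit_chain (hconn : T.Connected) {t : ℕ} (ht : t ≤ L) (hne : sfun T xs L t ≠ 0) :
    ∃ g : ℕ → V, ∀ j, 1 ≤ j → j ≤ sfun T xs L t →
      DD T xs L (g j) = j ∧ tt T xs L (g j) = t := by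
  obtain ⟨u, hu, hD⟩ := sfun_wit T xs L hne
  obtain ⟨w, hw⟩ := (hconn.preconnected (xs t) u).exists_walk_length_eq_dist
  refine ⟨w.getVert, ?_⟩
  intro j h1 hj
  have hdx : T.dist (xs t) u = DD T xs L u := by
    have h2 := (tt_mem T xs L u).2
    rw [hu] at h2
    exact h2
  have hlen : w.length = sfun T xs L t := by rw [hw, hdx, hD]
  have d1 : T.dist (xs t) (w.getVert j) ≤ j := by
    have h3 := dist_getVert_le hconn w 0 j (by omega)
    rw [Walk.getVert_zero] at h3
    omega
  have d2 : T.dist (w.getVert j) u ≤ sfun T xs L t - j := by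
    have h3 := dist_getVert_le hconn w j w.length (by omega)
    rw [Walk.getVert_length] at h3
    omega
  have hDj_le : DD T xs L (w.getVert j) ≤ j :=
    le_trans (DD_le T xs L ht) d1
  have htt_le : tt T xs L (w.getVert j) ≤ L := (tt_mem T xs L (w.getVert j)).1
  have hDu_le : DD T xs L u ≤ T.dist (xs (tt T xs L (w.getVert j))) u :=
    DD_le T xs L htt_le
  have htri := hconn.dist_triangle (u := xs (tt T xs L (w.getVert j)))
    (v := w.getVert j) (w := u)
  have htt_spec : T.dist (xs (tt T xs L (w.getVert j))) (w.getVert j)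
      = DD T xs L (w.getVert j) := (tt_mem T xs L (w.getVert j)).2
  have hDDj : DD T xs L (w.getVert j) = j := by omega
  have h5 : T.dist (xs t) (w.getVert j) = DD T xs L (w.getVert j) := by
    have := DD_le T xs L (u := w.getVert j) ht
    omega
  have htle : tt T xs L (w.getVert j) ≤ t := tt_min T xs L ht h5
  have h6 : T.dist (xs (tt T xs L (w.getVert j))) u = DD T xs L u := by omega
  have h7 : tt T xs L u ≤ tt T xs L (w.getVert j) := tt_min T xs L htt_le h6
  rw [hu] at h7
  exact ⟨hDDj, by omega⟩

lemma counting (hconn : T.Connected) {a b : V} {w : T.Walk a b} (hp : w.IsPath)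
    (hxs : ∀ i, xs i = w.getVert i) (hL : L = w.length) :
    L + 1 + ∑ t ∈ Finset.range (L+1), sfun T xs L t ≤ Fintype.card V := by
  have hwit : ∀ t : ℕ, t ≤ L → sfun T xs L t ≠ 0 →
      ∃ g : ℕ → V, ∀ j, 1 ≤ j → j ≤ sfun T xs L t →
        DD T xs L (g j) = j ∧ tt T xs L (g j) = t :=
    fun t ht hne => wit_chain T xs L hconn ht hne
  haveI : Nonempty (ℕ → V) := ⟨fun _ => a⟩
  choose! G hG using hwit
  have hDxs : ∀ i : ℕ, i ≤ L → DD T xs L (xs i) = 0 := by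
    intro i hi
    have h1 := DD_le T xs L (u := xs i) hi
    rw [SimpleGraph.dist_self] at h1
    omega
  have hinj : Function.Injective
      (Sum.elim (fun p : Σ t : Fin (L+1), Fin (sfun T xs L t) => G p.1 ((p.2 : ℕ) + 1))
        (fun i : Fin (L+1) => xs i)) := by
    intro x y hxy
    match x, y with
    | Sum.inl ⟨t, j⟩, Sum.inl ⟨t', j'⟩ =>
      simp only [Sum.elim_inl] at hxy
      have h1 := hG t (by omega) (by have := j.2; omega) ((j : ℕ) + 1) (by omega)
        (by have := j.2; omega)
      have h2 := hG t' (by omega) (by have := j'.2; omega) ((j' : ℕ) + 1) (by omega)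
        (by have := j'.2; omega)
      rw [hxy] at h1
      have ht : (t : ℕ) = (t' : ℕ) := by omega
      have htt : t = t' := Fin.ext ht
      subst htt
      have hjj : j = j' := Fin.ext (by omega)
      subst hjj
      rfl
    | Sum.inl ⟨t, j⟩, Sum.inr i =>
      exfalso
      simp only [Sum.elim_inl, Sum.elim_inr] at hxy
      have h1 := hG t (by omega) (by have := j.2; omega) ((j : ℕ) + 1) (by omega)
        (by have := j.2; omega)
      have h2 := hDxs i (by omega)
      rw [hxy] at h1
      omega
    | Sum.inr i, Sum.inl ⟨t, j⟩ =>
      exfalso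
      simp only [Sum.elim_inl, Sum.elim_inr] at hxy
      have h1 := hG t (by omega) (by have := j.2; omega) ((j : ℕ) + 1) (by omega)
        (by have := j.2; omega)
      have h2 := hDxs i (by omega)
      rw [← hxy] at h1
      omega
    | Sum.inr i, Sum.inr i' =>
      simp only [Sum.elim_inr] at hxy
      rw [hxs i, hxs i'] at hxy
      have := getVert_inj hp i i' (by have := i.2; omega) (by have := i'.2; omega) hxy
      exact congrArg Sum.inr (Fin.ext this)
  have hcard := Fintype.card_le_of_injective _ hinj
  rw [Fintype.card_sum, Fintype.card_sigma, Fintype.card_fin] at hcard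
  simp only [Fintype.card_fin] at hcard
  rw [Fin.sum_univ_eq_sum_range (fun t => sfun T xs L t) (L+1)] at hcard
  omega

end BurnGraph

lemma find_radius : ∀ (l : List (ℕ×ℕ×ℕ)), (l.map Prod.fst).Nodup → ∀ s ∈ l,
    l.find? (fun x => x.1 == s.1) = some s := by
  intro l
  induction l with
  | nil => intro _ s hs; simp at hs
  | cons x xs ih =>
    intro hnd s hs
    rw [List.map_cons, List.nodup_cons] at hnd
    rcases List.mem_cons.1 hs with rfl | hs
    · rw [List.find?_cons_of_pos (by simp)]
    · have hx : x.1 ≠ s.1 := by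
        intro hc
        exact hnd.1 (by rw [hc]; exact List.mem_map.2 ⟨s, hs, rfl⟩)
      rw [List.find?_cons_of_neg (by simp [hx])]
      exact ih hnd.2 s hs

theorem burning_of_bounded_growth_weak (k : ℕ) {V : Type*} [Fintype V]
    (T : SimpleGraph V) (hT : T.IsTree) (hk : GrowthLE T k) :
    burningNumber T ≤ ⌈Real.sqrt ((Fintype.card V : ℝ) + 400 * k ^ 4)⌉₊ := by
  classical
  obtain ⟨a, b, P, hP, hdom⟩ := hk
  have hconn : T.Connected := hT.isConnected
  set n := Fintype.card V with hn
  set m := ⌈Real.sqrt ((n : ℝ) + 400 * (k:ℝ) ^ 4)⌉₊ with hmdef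
  have hm2 : n + 400 * (k*k*k*k) ≤ m * m := by
    have h0 : (0:ℝ) ≤ (n:ℝ) + 400 * (k:ℝ) ^ 4 := by positivity
    have h1 : Real.sqrt ((n:ℝ) + 400 * (k:ℝ)^4) ≤ (m:ℝ) := Nat.le_ceil _
    have h2 : (n:ℝ) + 400*(k:ℝ)^4 ≤ (m:ℝ) * m := by
      nlinarith [Real.sq_sqrt h0, Real.sqrt_nonneg ((n:ℝ) + 400*(k:ℝ)^4)]
    have h3 : ((n + 400*(k*k*k*k) : ℕ) : ℝ) ≤ ((m*m : ℕ) : ℝ) := by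
      push_cast
      nlinarith [h2]
    exact_mod_cast h3
  set L := P.length with hLdef
  set xs : ℕ → V := fun i => P.getVert i with hxsdef
  set σg : ℕ → ℕ :=
    fun t => if 1 ≤ t ∧ t ≤ L + 1 then BurnGraph.sfun T xs L (t-1) else 0 with hσdef
  have hsfk : ∀ t, BurnGraph.sfun T xs L t ≤ k := by
    intro t
    apply Finset.sup_le
    intro u _
    obtain ⟨y, hy, hyd⟩ := hdom u
    obtain ⟨iy, hiyeq, hiyle⟩ := Walk.mem_support_iff_exists_getVert.1 hy
    have h1 : BurnGraph.DD T xs L u ≤ T.dist (xs iy) u := BurnGraph.DD_le T xs L hiyle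
    have h2 : xs iy = y := hiyeq
    rw [h2] at h1
    omega
  have hσk : ∀ t, σg t ≤ k := by
    intro t
    rw [hσdef]
    by_cases hc : 1 ≤ t ∧ t ≤ L + 1
    · simp only [if_pos hc]
      exact hsfk _
    · simp only [if_neg hc]
      omega
  have hσL : ∀ t, L + 1 < t → σg t = 0 := by
    intro t ht
    rw [hσdef]
    simp only [if_neg (by omega : ¬(1 ≤ t ∧ t ≤ L + 1))]
  have hsum : ∑ t ∈ Finset.range (L+2), σg t
      = ∑ t ∈ Finset.range (L+1), BurnGraph.sfun T xs L t := by
    rw [Finset.sum_range_succ']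
    have h1 : σg 0 = 0 := by rw [hσdef]; simp
    rw [h1, add_zero]
    apply Finset.sum_congr rfl
    intro i hi
    rw [Finset.mem_range] at hi
    rw [hσdef]
    simp only [if_pos (by omega : 1 ≤ i + 1 ∧ i + 1 ≤ L + 1)]
    congr 1
  have hcount := BurnGraph.counting T xs L hconn hP (fun i => rfl) rfl
  have hmKey : L + 1 + (∑ t ∈ Finset.range (L+2), σg t) + 400*(k*k*k*k) ≤ m*m := by
    rw [hsum]
    omega
  obtain ⟨segs, hgood, hnd, hmem⟩ := BurnKey.key hσk hσL m hmKey
  apply Nat.sInf_le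
  show Burnable T m
  refine ⟨fun i => ((segs.find? (fun x => x.1 == m - 1 - (i : ℕ))).map
    (fun s => xs (min (s.2.1 + 1 + (s.1 - BurnKey.lam L σg s.2.1)) (L+1) - 1))).getD a, ?_⟩
  intro u
  obtain ⟨httL, httd⟩ := BurnGraph.tt_mem T xs L u
  obtain ⟨s, hs, hs1, hs2, hfeas⟩ := BurnKey.good_covers hgood (BurnGraph.tt T xs L u + 1)
    (by omega) (by omega)
  have hsr := hmem s hs
  rw [Finset.mem_Ico] at hsr
  have hm1 : 1 ≤ m := by omega
  have hiFlt : m - 1 - s.1 < m := by omega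
  refine ⟨⟨m - 1 - s.1, hiFlt⟩, hconn.preconnected _ u, ?_⟩
  have hvali : m - 1 - ((⟨m - 1 - s.1, hiFlt⟩ : Fin m) : ℕ) = s.1 := by
    simp only []
    omega
  beta_reduce
  rw [hvali, find_radius segs hnd s hs]
  simp only [Option.map_some, Option.getD_some]
  have hcov := BurnKey.seg_center (k := k) (L := L) (σ := σg) hσk hfeas hsr.1 hs1 hs2
    (by omega)
  obtain ⟨hp1, hp2, hp3, hp4⟩ := hcov
  have hDσ : BurnGraph.DD T xs L u ≤ σg (BurnGraph.tt T xs L u + 1) := by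
    rw [hσdef]
    simp only [if_pos (by omega : 1 ≤ BurnGraph.tt T xs L u + 1 ∧
      BurnGraph.tt T xs L u + 1 ≤ L + 1), Nat.add_sub_cancel]
    exact BurnGraph.sfun_ge T xs L u
  have htri := hconn.dist_triangle
    (u := xs (min (s.2.1 + 1 + (s.1 - BurnKey.lam L σg s.2.1)) (L+1) - 1))
    (v := xs (BurnGraph.tt T xs L u)) (w := u)
  have hchain : T.dist (xs (min (s.2.1 + 1 + (s.1 - BurnKey.lam L σg s.2.1)) (L+1) - 1))
      (xs (BurnGraph.tt T xs L u)) ≤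
      (BurnGraph.tt T xs L u - (min (s.2.1 + 1 + (s.1 - BurnKey.lam L σg s.2.1)) (L+1) - 1))
      + ((min (s.2.1 + 1 + (s.1 - BurnKey.lam L σg s.2.1)) (L+1) - 1) - BurnGraph.tt T xs L u) :=
    BurnGraph.dist_getVert_both hconn P _ _
  omega
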